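/- For w = 2^c and any shift i ∈ {0,...,w-1}, every axis-parallel integer rectangle in [0,w]×[0,w] containing no point of the shifted Van der Corput set C_w^i = {(q, (f_w(q)+i) mod w) : 0 ≤ q ≤ w-1} has area strictly less than 4w. -/

import Mathlib

/-- Bit-reversing function. -/
def bitRev (c z : ℕ) : ℕ := ∑ i ∈ Finset.range c, (z / 2 ^ i % 2) * 2 ^ (c - 1 - i)

lemma sum_pow_two (n : ℕ) : ∑ i ∈ Finset.range n, 2 ^ i = 2 ^ n - 1 := by
  induction n with
  | zero => simp
  | succ n ih =>
    rw [Finset.sum_range_succ, ih]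
    have h1 : 1 ≤ 2 ^ n := Nat.one_le_two_pow
    have h2 : 2 ^ (n + 1) = 2 * 2 ^ n := by ring
    omega

lemma bitRev_lt (c z : ℕ) : bitRev c z < 2 ^ c := by
  have hle : bitRev c z ≤ ∑ i ∈ Finset.range c, 2 ^ (c - 1 - i) := by
    apply Finset.sum_le_sum
    intro i _
    have h2 : z / 2 ^ i % 2 ≤ 1 := Nat.lt_succ_iff.mp (Nat.mod_lt _ two_pos)
    calc z / 2 ^ i % 2 * 2 ^ (c - 1 - i) ≤ 1 * 2 ^ (c - 1 - i) :=
          Nat.mul_le_mul_right _ h2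
      _ = 2 ^ (c - 1 - i) := one_mul _
  have hrefl : ∑ i ∈ Finset.range c, 2 ^ (c - 1 - i) = ∑ i ∈ Finset.range c, 2 ^ i :=
    Finset.sum_range_reflect (fun i => 2 ^ i) c
  have hp : 1 ≤ 2 ^ c := Nat.one_le_two_pow
  rw [hrefl, sum_pow_two] at hle
  omega

lemma bitRev_succ (c z : ℕ) : bitRev (c + 1) z = z % 2 * 2 ^ c + bitRev c (z / 2) := by
  unfold bitRev
  rw [Finset.sum_range_succ']
  have h1 : ∀ i, i ∈ Finset.range c →
      z / 2 ^ (i + 1) % 2 * 2 ^ (c + 1 - 1 - (i + 1)) = z / 2 / 2 ^ i % 2 * 2 ^ (c - 1 - i) := by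
    intro i _
    have e1 : z / 2 ^ (i + 1) = z / 2 / 2 ^ i := by
      rw [Nat.div_div_eq_div_mul, pow_succ']
    have e2 : c + 1 - 1 - (i + 1) = c - 1 - i := by omega
    rw [e1, e2]
  rw [Finset.sum_congr rfl h1]
  simp [add_comm]

lemma bitRev_succ' (c z : ℕ) : bitRev (c + 1) z = 2 * bitRev c z + z / 2 ^ c % 2 := by
  unfold bitRev
  rw [Finset.sum_range_succ, Finset.mul_sum]
  congr 1
  · apply Finset.sum_congr rfl
    intro t ht
    have ht' := Finset.mem_range.mp ht
    have : c + 1 - 1 - t = (c - 1 - t) + 1 := by omega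
    rw [this, pow_succ]
    ring
  · simp

lemma bitRev_add_mul (c a b : ℕ) : bitRev c (a * 2 ^ c + b) = bitRev c b := by
  unfold bitRev
  apply Finset.sum_congr rfl
  intro t ht
  have ht' := Finset.mem_range.mp ht
  have h1 : a * 2 ^ c = a * 2 ^ (c - t - 1) * 2 * 2 ^ t := by
    rw [mul_assoc, mul_assoc, ← pow_succ', ← pow_add]
    congr 2
    omega
  rw [h1, Nat.add_comm, Nat.add_mul_div_right _ _ (Nat.two_pow_pos t),
    Nat.mul_comm (a * 2 ^ (c - t - 1)) 2, Nat.add_mul_mod_self_left]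

lemma bitRev_bitRev (c : ℕ) : ∀ v, v < 2 ^ c → bitRev c (bitRev c v) = v := by
  induction c with
  | zero => intro v hv; interval_cases v; simp [bitRev]
  | succ c ih =>
    intro v hv
    have hv2 : v / 2 < 2 ^ c := by
      have : 2 ^ (c + 1) = 2 ^ c * 2 := by ring
      omega
    rw [bitRev_succ c v, bitRev_succ', bitRev_add_mul, ih _ hv2]
    have h1 : (v % 2 * 2 ^ c + bitRev c (v / 2)) / 2 ^ c = v % 2 := by
      rw [Nat.add_comm, Nat.add_mul_div_right _ _ (Nat.two_pow_pos c),
        Nat.div_eq_of_lt (bitRev_lt c (v / 2))]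
      omega
    rw [h1, Nat.mod_mod_of_dvd _ dvd_rfl]
    omega

lemma bitRev_split : ∀ j c m u, j ≤ c → u < 2 ^ j →
    bitRev c (m * 2 ^ j + u) = bitRev (c - j) m + 2 ^ (c - j) * bitRev j u := by
  intro j
  induction j with
  | zero =>
    intro c m u _ hu
    interval_cases u
    simp [bitRev]
  | succ j ih =>
    intro c m u hj hu
    obtain ⟨c', rfl⟩ : ∃ c', c = c' + 1 := ⟨c - 1, by omega⟩
    have e1 : m * 2 ^ (j + 1) + u = 2 * (m * 2 ^ j) + u := by ring
    rw [e1, bitRev_succ]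
    have e2 : (2 * (m * 2 ^ j) + u) % 2 = u % 2 := by
      rw [Nat.mul_add_mod]
    have e3 : (2 * (m * 2 ^ j) + u) / 2 = m * 2 ^ j + u / 2 := by
      rw [Nat.mul_add_div two_pos]
    have hu2 : u / 2 < 2 ^ j := by
      have : 2 ^ (j + 1) = 2 ^ j * 2 := by ring
      omega
    rw [e2, e3, ih c' m (u / 2) (by omega) hu2, bitRev_succ]
    have e4 : c' + 1 - (j + 1) = c' - j := by omega
    rw [e4]
    have e5 : 2 ^ (c' - j) * (u % 2 * 2 ^ j + bitRev j (u / 2))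
        = u % 2 * (2 ^ (c' - j) * 2 ^ j) + 2 ^ (c' - j) * bitRev j (u / 2) := by ring
    rw [e5, ← pow_add]
    have e6 : c' - j + j = c' := by omega
    rw [e6]
    ring

/-- Any axis-parallel integer rectangle in `[0,w]×[0,w]` (with `w = 2^c`) containing no
point of the shifted Van der Corput set `C_w^i = {(q, (f_w(q)+i) mod w)}` has area `< 4w`. -/
theorem shifted_vdc_empty_rectangle_area (c i α β γ η : ℕ) (hc : 0 < c) (hi : i < 2 ^ c)
    (hβ : β ≤ 2 ^ c) (hη : η ≤ 2 ^ c)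
    (hempty : ∀ q, q < 2 ^ c →
      ¬(α ≤ q ∧ q < β ∧ γ ≤ (bitRev c q + i) % 2 ^ c ∧ (bitRev c q + i) % 2 ^ c < η)) :
    (β - α) * (η - γ) < 4 * 2 ^ c := by
  by_contra hcon
  push_neg at hcon
  set A := β - α with hAdef
  set B := η - γ with hBdef
  clear_value A B
  have hw : 0 < 2 ^ c := Nat.two_pow_pos c
  have hA2 : A ≤ 2 ^ c := by omega
  have hB2 : B ≤ 2 ^ c := by omega
  have hA4 : 4 ≤ A := by
    by_contra h
    have : A * B ≤ 3 * 2 ^ c := by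
      calc A * B ≤ 3 * B := Nat.mul_le_mul_right _ (by omega)
        _ ≤ 3 * 2 ^ c := Nat.mul_le_mul_left _ hB2
    omega
  have hB4 : 4 ≤ B := by
    by_contra h
    have : A * B ≤ 3 * 2 ^ c := by
      calc A * B ≤ A * 3 := Nat.mul_le_mul_left _ (by omega)
        _ = 3 * A := by ring
        _ ≤ 3 * 2 ^ c := Nat.mul_le_mul_left _ hA2
    omega
  -- choose j with 2^(j+1) ≤ A < 2^(j+2)
  set L := Nat.log 2 A with hLdef
  have hL1 : 2 ^ L ≤ A := by rw [hLdef]; exact Nat.pow_log_le_self 2 (by omega)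
  have hL2 : A < 2 ^ (L + 1) := by rw [hLdef]; exact Nat.lt_pow_succ_log_self (by norm_num) A
  clear_value L
  have hL22 : 2 ≤ L := by
    by_contra h
    have h1 : L + 1 ≤ 2 := by omega
    have h2 : 2 ^ (L + 1) ≤ 2 ^ 2 := Nat.pow_le_pow_right two_pos h1
    omega
  set j := L - 1 with hjdef
  clear_value j
  have hj1 : 2 ^ (j + 1) ≤ A := by rw [show j + 1 = L by omega]; exact hL1
  have hj2 : A < 2 ^ (j + 2) := by rw [show j + 2 = L + 1 by omega]; exact hL2
  have hjc : j + 1 ≤ c := by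
    have h1 : 2 ^ (j + 1) ≤ 2 ^ c := le_trans hj1 hA2
    exact (Nat.pow_le_pow_iff_right (by norm_num)).mp h1
  set k := c - j with hkdef
  clear_value k
  have hk1 : 1 ≤ k := by omega
  have hkj : k + j = c := by omega
  have hpj : 0 < 2 ^ j := Nat.two_pow_pos j
  have hpk : 0 < 2 ^ k := Nat.two_pow_pos k
  -- B > 2^k
  have hBk : 2 ^ k < B := by
    have h1 : 2 ^ (j + 2) * 2 ^ k = 4 * 2 ^ c := by
      rw [← pow_add, show j + 2 + k = c + 2 by omega]
      ring
    have h2 : A * B < 2 ^ (j + 2) * B := mul_lt_mul_of_pos_right hj2 (by omega)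
    have h3 : 2 ^ (j + 2) * 2 ^ k < 2 ^ (j + 2) * B := by omega
    exact Nat.lt_of_mul_lt_mul_left h3
  -- dyadic x-interval [m*2^j, (m+1)*2^j) ⊆ [α, β)
  set m := (α + 2 ^ j - 1) / 2 ^ j with hmdef
  clear_value m
  have hm1 : α ≤ m * 2 ^ j ∧ m * 2 ^ j < α + 2 ^ j := by
    have e1 := Nat.div_add_mod (α + 2 ^ j - 1) (2 ^ j)
    have e2 : (α + 2 ^ j - 1) % 2 ^ j < 2 ^ j := Nat.mod_lt _ hpj
    rw [← hmdef] at e1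
    have e3 : 2 ^ j * m = m * 2 ^ j := Nat.mul_comm _ _
    constructor <;> omega
  have hαβ : α + A = β := by omega
  have hm2 : (m + 1) * 2 ^ j ≤ β := by
    have e1 : (m + 1) * 2 ^ j = m * 2 ^ j + 2 ^ j := by ring
    have e2 : 2 ^ (j + 1) = 2 ^ j + 2 ^ j := by ring
    omega
  -- choose y ∈ [γ, η) with y ≡ bitRev k m + i [MOD 2^k]
  set r := (bitRev k m + i) % 2 ^ k with hrdef
  have hr : r < 2 ^ k := by rw [hrdef]; exact Nat.mod_lt _ hpk
  clear_value r
  set y := γ + (r + 2 ^ k - γ % 2 ^ k) % 2 ^ k with hydef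
  clear_value y
  have hγη : γ + B = η := by omega
  have hyη : y < η := by
    have : (r + 2 ^ k - γ % 2 ^ k) % 2 ^ k < 2 ^ k := Nat.mod_lt _ hpk
    omega
  have hyγ : γ ≤ y := by omega
  have hyc : y < 2 ^ c := by omega
  have hymod : y % 2 ^ k = r := by
    have hγm : γ % 2 ^ k < 2 ^ k := Nat.mod_lt _ hpk
    have e := Nat.div_add_mod γ (2 ^ k)
    have e' : γ + (r + 2 ^ k - γ % 2 ^ k) = 2 ^ k * (γ / 2 ^ k) + (r + 2 ^ k) := by omega
    rw [hydef, Nat.add_mod_mod, e', Nat.mul_add_mod, Nat.add_mod_right, Nat.mod_eq_of_lt hr]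
  -- construct v < 2^j with (2^k * v + s) % 2^c = y
  set s := (bitRev k m + i) % 2 ^ c with hsdef
  have hs : s < 2 ^ c := by rw [hsdef]; exact Nat.mod_lt _ hw
  have hdvdkc : 2 ^ k ∣ 2 ^ c := pow_dvd_pow 2 (by omega)
  have hsr : s % 2 ^ k = r := by
    rw [hsdef, Nat.mod_mod_of_dvd _ hdvdkc, ← hrdef]
  clear_value s
  set d := (y + 2 ^ c - s) % 2 ^ c with hddef
  have hd : d < 2 ^ c := by rw [hddef]; exact Nat.mod_lt _ hw
  clear_value d
  have hdk : d % 2 ^ k = 0 := by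
    set x := (y + 2 ^ c - s) % 2 ^ k with hxdef
    have hx : x < 2 ^ k := by rw [hxdef]; exact Nat.mod_lt _ hpk
    have e0 : d % 2 ^ k = x := by
      rw [hddef, hxdef]
      exact Nat.mod_mod_of_dvd _ hdvdkc
    clear_value x
    have e1 : y + 2 ^ c - s + s = y + 2 ^ c := by omega
    have e2 : (x + r) % 2 ^ k = (y + 2 ^ c) % 2 ^ k := by
      rw [hxdef, ← hsr, ← Nat.add_mod, e1]
    have e3 : (y + 2 ^ c) % 2 ^ k = r := by
      obtain ⟨t, ht⟩ := hdvdkc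
      have hck : 2 ^ c % 2 ^ k = 0 := by rw [ht, Nat.mul_mod_right]
      rw [Nat.add_mod, hck, Nat.add_zero, Nat.mod_mod_of_dvd _ dvd_rfl, hymod]
    rw [e3] at e2
    rcases lt_or_ge (x + r) (2 ^ k) with h | h
    · rw [Nat.mod_eq_of_lt h] at e2
      omega
    · have e4 : (x + r) % 2 ^ k = x + r - 2 ^ k := by
        rw [Nat.mod_eq_sub_mod h, Nat.mod_eq_of_lt (by omega)]
      omega
  set v := d / 2 ^ k with hvdef
  have hv : 2 ^ k * v = d := by
    rw [hvdef]
    exact Nat.mul_div_cancel' (Nat.dvd_of_mod_eq_zero hdk)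
  clear_value v
  have hvj : v < 2 ^ j := by
    have e1 : 2 ^ k * 2 ^ j = 2 ^ c := by rw [← pow_add, hkj]
    have h2 : 2 ^ k * v < 2 ^ k * 2 ^ j := by omega
    exact Nat.lt_of_mul_lt_mul_left h2
  have hcomp : (2 ^ k * v + s) % 2 ^ c = y := by
    rw [hv, hddef, Nat.mod_add_mod, show y + 2 ^ c - s + s = y + 2 ^ c by omega,
      Nat.add_mod_right, Nat.mod_eq_of_lt hyc]
  -- construct q
  set u := bitRev j v with hudef
  have hu : u < 2 ^ j := by rw [hudef]; exact bitRev_lt j v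
  have huv : bitRev j u = v := by rw [hudef]; exact bitRev_bitRev j v hvj
  clear_value u
  set q := m * 2 ^ j + u with hqdef
  clear_value q
  have hq2 : q < β := by
    have e1 : (m + 1) * 2 ^ j = m * 2 ^ j + 2 ^ j := by ring
    omega
  have hq3 : q < 2 ^ c := by omega
  have hbr : bitRev c q = bitRev k m + 2 ^ k * v := by
    rw [hqdef, bitRev_split j c m u (by omega) hu, ← hkdef, huv]
  have hfin : (bitRev c q + i) % 2 ^ c = y := by
    rw [hbr, show bitRev k m + 2 ^ k * v + i = 2 ^ k * v + (bitRev k m + i) by ring,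
      ← Nat.add_mod_mod, ← hsdef, hcomp]
  exact hempty q hq3 ⟨by omega, hq2, by rw [hfin]; exact hyγ, by rw [hfin]; exact hyη⟩
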